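/- Let 𝔸 be a nonnegative tensor of order m ≥ 2 and dimension n. If 𝔸^r is essentially positive (i.e. 𝔸^r x > 0 entrywise for every nonzero nonnegative vector x ∈ ℝⁿ), then 𝔸^{r+1} is also essentially positive. -/
import Mathlib


open scoped BigOperators

noncomputable section

/-- An "order (1 + |α|)" tensor of dimension `|I|` over `R`: entries indexed by a
head index in `I` and a tail of indices `α → I`. -/
abbrev Tensor (R I α : Type) : Type := I → (α → I) → R

/-- The general tensor product: `(A*B)_{i α₁ ⋯ α_m} = ∑ a_{i i₂ ⋯} ∏ b_{i_j α_j}`. -/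
def tmul {R I α β : Type} [CommSemiring R] [Fintype I] [DecidableEq α] [Fintype α]
    (A : Tensor R I α) (B : Tensor R I β) : Tensor R I (α × β) :=
  fun i f => ∑ t : α → I, A i t * ∏ j : α, B (t j) (fun b => f (j, b))

/-- The general tensor product of a tensor with a vector (an order-1 tensor). -/
def tapp {R I α : Type} [CommSemiring R] [Fintype I] [DecidableEq α] [Fintype α]
    (A : Tensor R I α) (x : I → R) : I → R :=
  fun i => ∑ t : α → I, A i t * ∏ j : α, x (t j)

/-- The general tensor product `P * A` where `P` is a matrix (an order-2 tensor). -/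
def matMulT {R I α : Type} [CommSemiring R] [Fintype I]
    (P : Matrix I I R) (A : Tensor R I α) : Tensor R I α :=
  fun i f => ∑ j : I, P i j * A j f

/-- The general tensor product `A * Q` where `Q` is a matrix (an order-2 tensor). -/
def tMulMat {R I α : Type} [CommSemiring R] [Fintype I] [DecidableEq α] [Fintype α]
    (A : Tensor R I α) (Q : Matrix I I R) : Tensor R I α :=
  fun i f => ∑ t : α → I, A i t * ∏ j : α, Q (t j) (f j)

/-- The unit tensor `𝕀`: entries `1` exactly on the diagonal. -/
def unitT (R I α : Type) [CommSemiring R] [DecidableEq I] [Fintype α] [DecidableEq α] :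
    Tensor R I α :=
  fun i f => if ∀ j, f j = i then 1 else 0

/-- The direct product of two tensors of the same order. -/
def dprod {R I J α : Type} [CommSemiring R]
    (A : Tensor R I α) (B : Tensor R J α) : Tensor R (I × J) α :=
  fun p f => A p.1 (fun j => (f j).1) * B p.2 (fun j => (f j).2)

end

noncomputable section

/-- Tail index type of the `r+1`-st power (under the general tensor product) of a
tensor with tail `Fin m`. -/
def PowIdx (m : ℕ) : ℕ → Type
  | 0 => Fin m
  | r + 1 => Fin m × PowIdx m r

def powIdxFintype (m : ℕ) : (r : ℕ) → Fintype (PowIdx m r)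
  | 0 => inferInstanceAs (Fintype (Fin m))
  | r + 1 => letI := powIdxFintype m r; inferInstanceAs (Fintype (Fin m × PowIdx m r))

def powIdxDecEq (m : ℕ) : (r : ℕ) → DecidableEq (PowIdx m r)
  | 0 => inferInstanceAs (DecidableEq (Fin m))
  | r + 1 => letI := powIdxDecEq m r; inferInstanceAs (DecidableEq (Fin m × PowIdx m r))

instance (m r : ℕ) : Fintype (PowIdx m r) := powIdxFintype m r
instance (m r : ℕ) : DecidableEq (PowIdx m r) := powIdxDecEq m r

/-- `tpow A r` is the power `𝔸^{r+1}` of `𝔸` under the general tensor product. -/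
def tpow {R : Type} [CommSemiring R] {n m : ℕ} (A : Tensor R (Fin n) (Fin m)) :
    (r : ℕ) → Tensor R (Fin n) (PowIdx m r)
  | 0 => A
  | r + 1 => tmul A (tpow A r)

/-- A real tensor `𝔹` is essentially positive if `𝔹x > 0` entrywise for every
nonzero nonnegative vector `x`. -/
def EssPos {n : ℕ} {α : Type} [DecidableEq α] [Fintype α]
    (B : Tensor ℝ (Fin n) α) : Prop :=
  ∀ x : Fin n → ℝ, (∀ i, 0 ≤ x i) → x ≠ 0 → ∀ i, 0 < tapp B x i

end

lemma tapp_tmul {R I α β : Type} [CommSemiring R] [Fintype I] [DecidableEq α]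
    [Fintype α] [DecidableEq β] [Fintype β]
    (A : Tensor R I α) (B : Tensor R I β) (x : I → R) :
    tapp (tmul A B) x = tapp A (tapp B x) := by
  funext i
  unfold tapp tmul
  simp only [Finset.sum_mul]
  rw [Finset.sum_comm]
  refine Finset.sum_congr rfl fun s _ => ?_
  rw [Finset.prod_univ_sum, Fintype.piFinset_univ]
  rw [Finset.mul_sum]
  rw [← Equiv.sum_comp (Equiv.curry α β I).symm]
  refine Finset.sum_congr rfl fun g _ => ?_
  simp only [Equiv.curry_symm_apply, Function.uncurry]
  rw [Finset.prod_mul_distrib, Fintype.prod_prod_type, mul_assoc]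

/-- if `𝔸^{r+1}` (`= tpow A r`) is essentially positive, so is
`𝔸^{r+2}`. `𝔸` is a nonnegative tensor of order `m + 1 ≥ 2`. -/
theorem essPos_succ (n m r : ℕ) (hm : 1 ≤ m)
    (A : Tensor ℝ (Fin n) (Fin m)) (hA : ∀ i f, 0 ≤ A i f)
    (h : EssPos (tpow A r)) : EssPos (tpow A (r + 1)) := by
  intro x hx hx0 i
  have hn : 0 < n := by
    rcases Nat.eq_zero_or_pos n with h0 | h0
    · exact absurd (funext fun j => absurd j.2 (by omega)) hx0
    · exact h0
  -- the i-th row of A is not identically zero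
  have hrow : ∃ t : Fin m → Fin n, 0 < A i t := by
    by_contra hc
    push_neg at hc
    have hzero : ∀ t, A i t = 0 := fun t => le_antisymm (hc t) (hA i t)
    have hone : (fun _ : Fin n => (1 : ℝ)) ≠ 0 := by
      intro he
      have := congrFun he ⟨0, hn⟩
      norm_num at this
    have hpos := h (fun _ => 1) (fun _ => zero_le_one) hone i
    have hzr : tapp (tpow A r) (fun _ => (1 : ℝ)) i = 0 := by
      cases r with
      | zero =>
          simp only [tpow, tapp]
          exact Finset.sum_eq_zero fun t _ => by rw [hzero t, zero_mul]
      | succ k =>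
          show tapp (tmul A (tpow A k)) (fun _ => (1 : ℝ)) i = 0
          rw [tapp_tmul]
          exact Finset.sum_eq_zero fun t _ => by rw [hzero t, zero_mul]
    rw [hzr] at hpos
    exact lt_irrefl 0 hpos
  obtain ⟨t₀, ht₀⟩ := hrow
  have hy : ∀ j, 0 < tapp (tpow A r) x j := h x hx hx0
  show 0 < tapp (tmul A (tpow A r)) x i
  rw [tapp_tmul]
  refine Finset.sum_pos' (fun t _ => ?_) ⟨t₀, Finset.mem_univ t₀, ?_⟩
  · exact mul_nonneg (hA i t) (Finset.prod_nonneg fun j _ => (hy (t j)).le)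
  · exact mul_pos ht₀ (Finset.prod_pos fun j _ => hy (t₀ j))
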